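/- arXiv:2101.11494 — 2 statements merged into one kernel-verified Lean document; each statement's English description precedes it below -/
import Mathlib

section
/- Let B be a complete Boolean algebra and (P_γ)_{γ≤μ} a family of complete subalgebras of B indexed by the ordinals γ ≤ μ, with P_γ ⊆ P_δ whenever γ ≤ δ and P_μ = B. Let κ be an uncountable cardinal, D a κ-complete ultrafilter on κ, and f : κ → B a function such that supp(f(α)) is finite for every α < κ. Then the set {δ ≤ μ : for all γ < δ, {α < κ : h_δ(f(α)) = h_γ(f(α))} ∉ D} — which is the support of the class of f in the ultrapower iteration ((P_γ)^κ/D)_{γ≤μ} — is finite. -/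
/-- A complete subalgebra of a complete Boolean algebra: contains `⊥` and `⊤` and is closed
under complementation and arbitrary suprema and infima as computed in the ambient algebra. -/
def IsCompleteSubalg {B : Type u} [CompleteBooleanAlgebra B] (S : Set B) : Prop :=
  ⊥ ∈ S ∧ ⊤ ∈ S ∧ (∀ x ∈ S, xᶜ ∈ S) ∧ (∀ T ⊆ S, sSup T ∈ S) ∧ (∀ T ⊆ S, sInf T ∈ S)

/-- The projection to a complete subalgebra: `h(p) = inf {x ∈ S : p ≤ x}`. -/
noncomputable def proj {B : Type u} [CompleteBooleanAlgebra B] (S : Set B) (p : B) : B :=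
  sInf {x | x ∈ S ∧ p ≤ x}

theorem proj_antitone {B : Type u} [CompleteBooleanAlgebra B] {S T : Set B} (h : S ⊆ T) (p : B) :
    proj T p ≤ proj S p := by
  apply sInf_le_sInf
  intro x hx
  exact ⟨h hx.1, hx.2⟩

/-- An infinite set of ordinals contains a strictly increasing ω-sequence. -/
theorem exists_strictMono_of_infinite {T : Set Ordinal} (hT : T.Infinite) :
    ∃ g : ℕ → Ordinal, StrictMono g ∧ ∀ n, g n ∈ T := by
  have e := hT.natEmbedding
  have hPWO : (Set.univ : Set Ordinal).IsPWO :=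
    (Set.isWF_univ_iff.2 inferInstance).isPWO
  obtain ⟨g, hg⟩ := hPWO.exists_monotone_subseq (f := fun n => (e n : Ordinal)) (fun n => trivial)
  refine ⟨fun n => (e (g n) : Ordinal), ?_, fun n => (e (g n)).2⟩
  have hinj : Function.Injective fun n => (e (g n) : Ordinal) := by
    intro a b hab
    exact g.injective (e.injective (Subtype.val_injective hab))
  exact hg.strictMono_of_injective hinj

/-- If `f : κ → B` has finite supports pointwise, then the support of its
class in the ultrapower iteration `((P_γ)^κ/D)_{γ≤μ}` is finite. -/
theorem stmt_6 {B : Type u} [CompleteBooleanAlgebra B] {κ : Type v}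
    (μ : Ordinal) (P : Ordinal → Set B)
    (hsub : ∀ γ ≤ μ, IsCompleteSubalg (P γ))
    (hmono : ∀ γ δ : Ordinal, γ ≤ δ → δ ≤ μ → P γ ⊆ P δ)
    (htop : P μ = Set.univ)
    (hκ : Cardinal.aleph0 < Cardinal.mk κ)
    (D : Ultrafilter κ)
    (hcomplete : ∀ S : Set (Set κ), Cardinal.mk S < Cardinal.mk κ →
      (∀ s ∈ S, s ∈ D) → ⋂₀ S ∈ D)
    (f : κ → B)
    (hfin : ∀ α : κ,
      {δ : Ordinal | δ ≤ μ ∧ ∀ γ < δ, proj (P δ) (f α) ≠ proj (P γ) (f α)}.Finite) :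
    {δ : Ordinal | δ ≤ μ ∧
        ∀ γ < δ, {α : κ | proj (P δ) (f α) = proj (P γ) (f α)} ∉ D}.Finite := by
  by_contra hinf
  replace hinf : Set.Infinite _ := hinf
  obtain ⟨g, hg, hgT⟩ := exists_strictMono_of_infinite hinf
  -- each consecutive pair disagrees on a D-large set
  set A : ℕ → Set κ := fun n => {α : κ | proj (P (g (n+1))) (f α) = proj (P (g n)) (f α)}ᶜ
    with hA_def
  have hA : ∀ n, A n ∈ D := fun n =>
    (Ultrafilter.compl_mem_iff_notMem).2 ((hgT (n+1)).2 (g n) (hg (Nat.lt_succ_self n)))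
  have hS : ⋂₀ Set.range A ∈ D := by
    apply hcomplete
    · exact lt_of_le_of_lt ((Set.countable_range A).le_aleph0) hκ
    · rintro s ⟨n, rfl⟩; exact hA n
  obtain ⟨α, hα⟩ := Ultrafilter.nonempty_of_mem hS
  have hαn : ∀ n, proj (P (g (n+1))) (f α) ≠ proj (P (g n)) (f α) := by
    intro n
    have := hα (A n) ⟨n, rfl⟩
    simpa [hA_def] using this
  -- build the witness ordinals in supp (f α)
  set E : ℕ → Set Ordinal := fun n => {e | proj (P e) (f α) = proj (P (g (n+1))) (f α)}
    with hE_def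
  have hEne : ∀ n, (E n).Nonempty := fun n => ⟨g (n+1), rfl⟩
  set ε : ℕ → Ordinal := fun n => sInf (E n) with hε_def
  have hmemE : ∀ n, ε n ∈ E n := fun n => csInf_mem (hEne n)
  have hεle : ∀ n, ε n ≤ g (n+1) := fun n => csInf_le' rfl
  have hgμ : ∀ n, g n ≤ μ := fun n => (hgT n).1
  have hεμ : ∀ n, ε n ≤ μ := fun n => (hεle n).trans (hgμ (n+1))
  have hεgt : ∀ n, g n < ε n := by
    intro n
    by_contra h
    push_neg at h
    apply hαn n
    have h1 : proj (P (g (n+1))) (f α) ≤ proj (P (g n)) (f α) :=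
      proj_antitone (hmono _ _ (hg (Nat.lt_succ_self n)).le (hgμ (n+1))) _
    have h2 : proj (P (g n)) (f α) ≤ proj (P (ε n)) (f α) :=
      proj_antitone (hmono _ _ h (hgμ n)) _
    have h3 : proj (P (ε n)) (f α) = proj (P (g (n+1))) (f α) := hmemE n
    exact le_antisymm h1 (h2.trans_eq h3)
  have hεmono : StrictMono ε := strictMono_nat_of_lt_succ fun n =>
    lt_of_le_of_lt (hεle n) (hεgt (n+1))
  have hεsupp : ∀ n, ε n ∈ {δ : Ordinal | δ ≤ μ ∧
      ∀ γ < δ, proj (P δ) (f α) ≠ proj (P γ) (f α)} := by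
    intro n
    refine ⟨hεμ n, fun γ hγ hEq => ?_⟩
    have hγE : γ ∈ E n := by
      have := hmemE n
      simp only [hE_def, Set.mem_setOf_eq] at this ⊢
      exact hEq.symm.trans this
    exact absurd (csInf_le' hγE) (not_le.2 hγ)
  exact (Set.infinite_of_injective_forall_mem hεmono.injective hεsupp) (hfin α)
end

section
/- Let B be a complete Boolean algebra and (P_γ)_{γ≤μ} a family of complete subalgebras of B indexed by the ordinals γ ≤ μ, with P_γ ⊆ P_δ whenever γ ≤ δ and P_μ = B. Assume there are sets D_γ ⊆ P_γ \ {⊥} for γ ≤ μ such that: (I) D_γ ⊆ D_δ for γ ≤ δ ≤ μ; (II) h_γ(p) ∈ D_γ for every γ ≤ μ and every p ∈ D_μ; (III) supp(p) is finite for every p ∈ D_μ; and each D_γ is dense in P_γ, i.e., every nonzero element of P_γ has a lower bound in D_γ. Then for every limit ordinal δ ≤ μ, the union ⋃_{γ<δ} P_γ completely embeds into P_δ: every nonzero p ∈ P_δ has a reduction to ⋃_{γ<δ} P_γ, i.e., there are γ₀ < δ and a nonzero p₀ ∈ P_{γ₀} such that every nonzero q ∈ ⋃_{γ<δ} P_γ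 with q ≤ p₀ satisfies q ⊓ p ≠ ⊥. -/
/-- The support of `p` with respect to the family `(P_γ)_{γ≤μ}`:
`supp(p) = {δ ≤ μ : h_δ(p) ≠ h_γ(p) for all γ < δ}`. -/
noncomputable def supp {B : Type u} [CompleteBooleanAlgebra B] (μ : Ordinal.{v})
    (P : Ordinal.{v} → Set B) (p : B) : Set Ordinal.{v} :=
  {δ | δ ≤ μ ∧ ∀ γ < δ, proj (P δ) p ≠ proj (P γ) p}

/-- In an iteration with finite supports, at every limit ordinal `δ ≤ μ`
the union `⋃_{γ<δ} P_γ` completely embeds into `P_δ`: every nonzero `p ∈ P_δ` has a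
reduction. -/
theorem stmt_8 {B : Type u} [CompleteBooleanAlgebra B]
    (μ : Ordinal.{v}) (P : Ordinal.{v} → Set B)
    (hsub : ∀ γ ≤ μ, IsCompleteSubalg (P γ))
    (hmono : ∀ γ δ : Ordinal.{v}, γ ≤ δ → δ ≤ μ → P γ ⊆ P δ)
    (htop : P μ = Set.univ)
    (Ds : Ordinal.{v} → Set B)
    (hDsub : ∀ γ ≤ μ, Ds γ ⊆ P γ ∧ (⊥ : B) ∉ Ds γ)
    (hI : ∀ γ δ : Ordinal.{v}, γ ≤ δ → δ ≤ μ → Ds γ ⊆ Ds δ)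
    (hII : ∀ γ ≤ μ, ∀ p ∈ Ds μ, proj (P γ) p ∈ Ds γ)
    (hIII : ∀ p ∈ Ds μ, (supp μ P p).Finite)
    (hdense : ∀ γ ≤ μ, ∀ p ∈ P γ, p ≠ ⊥ → ∃ d ∈ Ds γ, d ≤ p) :
    ∀ δ ≤ μ, Order.IsSuccLimit δ → ∀ p ∈ P δ, p ≠ ⊥ →
      ∃ γ₀ < δ, ∃ p₀ ∈ P γ₀, p₀ ≠ ⊥ ∧
        ∀ q ∈ ⋃ γ ∈ Set.Iio δ, P γ, q ≠ ⊥ → q ≤ p₀ → q ⊓ p ≠ ⊥ := by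
  intro δ hδμ hlim p hpP hpne
  obtain ⟨d, hdD, hdp⟩ := hdense δ hδμ p hpP hpne
  have hdμ : d ∈ Ds μ := hI δ μ hδμ le_rfl hdD
  have hdne : d ≠ ⊥ := fun h => (hDsub δ hδμ).2 (h ▸ hdD)
  -- basic projection facts
  have hle_proj : ∀ S : Set B, d ≤ proj S d := fun S => le_sInf fun x hx => hx.2
  have hanti : ∀ S T : Set B, S ⊆ T → proj T d ≤ proj S d := by
    intro S T hST
    exact sInf_le_sInf (fun x hx => ⟨hST hx.1, hx.2⟩)
  have hproj_le : ∀ (S : Set B) (x : B), x ∈ S → d ≤ x → proj S d ≤ x :=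
    fun S x hx hdx => sInf_le ⟨hx, hdx⟩
  have hproj_mem : ∀ γ ≤ μ, proj (P γ) d ∈ P γ := by
    intro γ hγ
    exact (hsub γ hγ).2.2.2.2 _ (fun x hx => hx.1)
  -- minimal-ordinal lemma: every projection is realized at a support ordinal
  have hmin : ∀ ε ≤ μ, ∃ β, β ∈ supp μ P d ∧ β ≤ ε ∧ proj (P β) d = proj (P ε) d := by
    intro ε hε
    set s : Set Ordinal.{v} := {γ | γ ≤ ε ∧ proj (P γ) d = proj (P ε) d} with hs
    have hne : s.Nonempty := ⟨ε, le_rfl, rfl⟩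
    have hmem : sInf s ∈ s := csInf_mem hne
    refine ⟨sInf s, ⟨hmem.1.trans hε, ?_⟩, hmem.1, hmem.2⟩
    intro γ hγ heq
    have : γ ∈ s := ⟨hγ.le.trans hmem.1, heq ▸ hmem.2⟩
    exact notMem_of_lt_csInf hγ (OrderBot.bddBelow s) this
  -- choose γ₀ above the support restricted below δ
  have hfin : (supp μ P d ∩ Set.Iio δ).Finite :=
    (hIII d hdμ).subset Set.inter_subset_left
  obtain ⟨γ₀, hγ₀δ, hγ₀⟩ : ∃ γ₀ < δ, ∀ β ∈ supp μ P d ∩ Set.Iio δ, β < γ₀ := by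
    refine ⟨Order.succ (hfin.toFinset.sup id), hlim.succ_lt ?_, ?_⟩
    · rcases hfin.toFinset.eq_empty_or_nonempty with h | h
      · rw [h]; simpa using hlim.pos
      · exact (Finset.sup_lt_iff (by simpa using hlim.pos)).2
          (fun b hb => (hfin.mem_toFinset.1 hb).2)
    · intro β hβ
      exact lt_of_le_of_lt (Finset.le_sup (f := id) (hfin.mem_toFinset.2 hβ))
        (Order.lt_succ _)
  have hγ₀μ : γ₀ ≤ μ := hγ₀δ.le.trans hδμ
  refine ⟨γ₀, hγ₀δ, proj (P γ₀) d, hproj_mem γ₀ hγ₀μ, ?_, ?_⟩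
  · intro h
    exact hdne (le_bot_iff.1 (h ▸ hle_proj (P γ₀)))
  -- constancy of the projection on [γ₀, δ)
  have hconst : ∀ γ, γ₀ ≤ γ → γ < δ → proj (P γ) d = proj (P γ₀) d := by
    intro γ hγ₀γ hγδ
    have hγμ : γ ≤ μ := hγδ.le.trans hδμ
    obtain ⟨β, hβsupp, hβγ, hβeq⟩ := hmin γ hγμ
    have hβγ₀ : β < γ₀ := hγ₀ β ⟨hβsupp, lt_of_le_of_lt hβγ hγδ⟩
    have h1 : proj (P γ) d ≤ proj (P γ₀) d :=
      hanti _ _ (hmono γ₀ γ hγ₀γ hγμ)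
    have h2 : proj (P γ₀) d ≤ proj (P β) d :=
      hanti _ _ (hmono β γ₀ hβγ₀.le hγ₀μ)
    exact le_antisymm h1 (hβeq ▸ h2)
  intro q hq hqne hqle
  simp only [Set.mem_iUnion] at hq
  obtain ⟨γ, hγδ, hqγ⟩ := hq
  have hγδ' : γ < δ := hγδ
  set γ' := max γ γ₀ with hγ'
  have hγ'δ : γ' < δ := max_lt hγδ' hγ₀δ
  have hγ'μ : γ' ≤ μ := hγ'δ.le.trans hδμ
  have hqγ' : q ∈ P γ' := hmono γ γ' (le_max_left _ _) hγ'μ hqγ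
  have hconst' : proj (P γ') d = proj (P γ₀) d := hconst γ' (le_max_right _ _) hγ'δ
  intro hqp
  have hqd : q ⊓ d = ⊥ := by
    have : q ⊓ d ≤ q ⊓ p := inf_le_inf_left q hdp
    exact le_bot_iff.1 (hqp ▸ this)
  have hdqc : d ≤ qᶜ := by
    have : Disjoint q d := disjoint_iff.2 hqd
    exact this.symm.le_compl_right
  have hqcP : qᶜ ∈ P γ' := (hsub γ' hγ'μ).2.2.1 q hqγ'
  have : proj (P γ') d ≤ qᶜ := hproj_le _ _ hqcP hdqc
  have hqqc : q ≤ qᶜ := hqle.trans (hconst' ▸ this)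
  exact hqne (le_bot_iff.1 (by calc q ≤ q ⊓ qᶜ := le_inf le_rfl hqqc
                                 _ = ⊥ := inf_compl_eq_bot))
end
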